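/- Let Γ be a countable discrete group, (X,μ) a standard probability space, and L a finite set of size k. Then for every finite family (A_p)_{p=1}^q of basic clopen cylinder sets A_p ⊆ L^Γ and every ε > 0 there is δ > 0 such that for all measure-preserving actions a, b of Γ on (X,μ) with d(a,b) < δ and every measurable φ: X → L there exists a measurable ψ: X → L with |(Φ_L^{φ,a})_*μ(A_p) − (Φ_L^{ψ,b})_*μ(A_p)| < ε for all p ≤ q. -/

import Mathlib

open MeasureTheory Filter Topology Set

/-- A measure-preserving action of a group `Γ` on a measure space `(X, μ)`. -/
structure MPAction (Γ : Type*) [Group Γ] (X : Type*) [MeasurableSpace X]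
    (μ : MeasureTheory.Measure X) where
  act : Γ → X → X
  measurePreserving_act : ∀ γ : Γ, MeasureTheory.MeasurePreserving (act γ) μ μ
  act_one : ∀ x, act 1 x = x
  act_mul : ∀ γ δ x, act (γ * δ) x = act γ (act δ x)

namespace MPAction

variable {Γ : Type*} [Group Γ] {X : Type*} [MeasurableSpace X] {μ : Measure X}
  {Y : Type*} [MeasurableSpace Y] {ν : Measure Y}
  {W : Type*} [MeasurableSpace W] {ρ : Measure W}

/-- Weak containment of measure-preserving actions. -/
def WeaklyContained (a : MPAction Γ X μ) (b : MPAction Γ Y ν) : Prop :=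
  ∀ (n : ℕ) (A : Fin n → Set X), (∀ i, MeasurableSet (A i)) →
    ∀ (F : Finset Γ) (ε : ℝ), 0 < ε →
      ∃ B : Fin n → Set Y, (∀ i, MeasurableSet (B i)) ∧
        ∀ γ ∈ F, ∀ i j : Fin n,
          |(μ (a.act γ '' A i ∩ A j)).toReal - (ν (b.act γ '' B i ∩ B j)).toReal| < ε

/-- Weak equivalence of measure-preserving actions. -/
def WeakEquiv (a : MPAction Γ X μ) (b : MPAction Γ Y ν) : Prop :=
  WeaklyContained a b ∧ WeaklyContained b a

/-- A finite measurable partition of the space. -/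
def IsPartition {k : ℕ} (A : Fin k → Set X) : Prop :=
  (∀ i, MeasurableSet (A i)) ∧ Pairwise (Function.onFun Disjoint A) ∧ (⋃ i, A i) = Set.univ

/-- The compact set `C_{n,k}(a) ⊆ [0,1]^{n × k × k}`: the closure of the collection of
matrices of measures `μ(γ_p^a A_q ∩ A_r)` over all measurable `k`-partitions, with respect
to the fixed enumeration `e` of the group. -/
noncomputable def Cnk (e : ℕ → Γ) (a : MPAction Γ X μ) (n k : ℕ) :
    Set ((Fin n × Fin k × Fin k) → ℝ) :=
  closure { v | ∃ A : Fin k → Set X, IsPartition A ∧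
    ∀ (p : Fin n) (q r : Fin k), v (p, q, r) = (μ (a.act (e p.1) '' A q ∩ A r)).toReal }

/-- The metric `d` on weak equivalence classes:
`d(a,b) = Σ_{n,k} 2^{-(n+k)} d_H(C_{n,k}(a), C_{n,k}(b))`. -/
noncomputable def dWE (e : ℕ → Γ) (a : MPAction Γ X μ) (b : MPAction Γ Y ν) : ℝ :=
  ∑' nk : ℕ × ℕ, (2 : ℝ) ^ (-(nk.1 : ℤ) - (nk.2 : ℤ)) *
    Metric.hausdorffDist (Cnk e a nk.1 nk.2) (Cnk e b nk.1 nk.2)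

section Mix

variable {ι : Type*} {Z : ι → Type*} [∀ i, MeasurableSpace (Z i)]

theorem measurable_sigmaMk' (i : ι) : Measurable (@Sigma.mk ι Z i) :=
  measurable_iff_le_map.2 (iInf_le _ i)

theorem measurable_of_sigma {δ : Type*} [MeasurableSpace δ] {f : Sigma Z → δ}
    (hf : ∀ i, Measurable (f ∘ Sigma.mk i)) : Measurable f := by
  intro s hs
  rw [Sigma.instMeasurableSpace, MeasurableSpace.measurableSet_iInf]
  intro i
  exact hf i hs

/-- The measure `Σ_i λ_i ν_i` on the disjoint union `⊔_i Z_i`. -/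
noncomputable def mixMeasure (lam : ι → ℝ) (νs : ∀ i, Measure (Z i)) :
    Measure ((i : ι) × Z i) :=
  Measure.sum fun i => ENNReal.ofReal (lam i) • (νs i).map (Sigma.mk i)

instance mixMeasure.instSFinite [Countable ι] (lam : ι → ℝ) (νs : ∀ i, Measure (Z i))
    [∀ i, SFinite (νs i)] : SFinite (mixMeasure lam νs) := by
  unfold mixMeasure
  infer_instance

/-- The convex combination `Σ_i λ_i a_i` of measure-preserving actions, acting on the
disjoint union `⊔_i Z_i` with the measure `Σ_i λ_i ν_i`. -/
noncomputable def mix [Countable ι] {νs : ∀ i, Measure (Z i)} (lam : ι → ℝ)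
    (a : ∀ i, MPAction Γ (Z i) (νs i)) : MPAction Γ ((i : ι) × Z i) (mixMeasure lam νs) where
  act γ p := ⟨p.1, (a p.1).act γ p.2⟩
  measurePreserving_act γ := by
    have hmeas : Measurable fun p : (i : ι) × Z i => (⟨p.1, (a p.1).act γ p.2⟩ : (i : ι) × Z i) := by
      apply measurable_of_sigma
      intro i
      exact (measurable_sigmaMk' i).comp ((a i).measurePreserving_act γ).measurable
    refine ⟨hmeas, ?_⟩
    refine Measure.ext fun s hs => ?_
    rw [Measure.map_apply hmeas hs]
    rw [mixMeasure, Measure.sum_apply _ (hmeas hs), Measure.sum_apply _ hs]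
    congr 1
    funext i
    rw [Measure.smul_apply, Measure.smul_apply,
      Measure.map_apply (measurable_sigmaMk' i) (hmeas hs),
      Measure.map_apply (measurable_sigmaMk' i) hs]
    congr 1
    have hpre : (Sigma.mk i) ⁻¹'
        ((fun p : (i : ι) × Z i => (⟨p.1, (a p.1).act γ p.2⟩ : (i : ι) × Z i)) ⁻¹' s)
        = ((a i).act γ) ⁻¹' (Sigma.mk i ⁻¹' s) := rfl
    rw [hpre]
    exact ((a i).measurePreserving_act γ).measure_preimage
      ((measurable_sigmaMk' i) hs).nullMeasurableSet
  act_one p := by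
    cases p with
    | mk i x => simp only [(a i).act_one]
  act_mul γ δ p := by
    cases p with
    | mk i x => simp only [(a i).act_mul]

end Mix

/-- The binary convex combination `t a + (1 - t) b` of two actions on `(X, μ)`,
realized on the disjoint union of two copies of `X` carrying measures `tμ` and `(1-t)μ`. -/
noncomputable def convComb (t : ℝ) (a b : MPAction Γ X μ) :
    MPAction Γ ((_ : Fin 2) × X) (mixMeasure ![t, 1 - t] fun _ => μ) :=
  mix (νs := fun _ => μ) ![t, 1 - t] ![a, b]

/-- The trivial action. -/
def trivAction (Γ : Type*) [Group Γ] (Y : Type*) [MeasurableSpace Y] (ν : Measure Y) :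
    MPAction Γ Y ν where
  act _ y := y
  measurePreserving_act _ := MeasurePreserving.id ν
  act_one _ := rfl
  act_mul _ _ _ := rfl

/-- The product of two measure-preserving actions. -/
noncomputable def prodAction [SFinite μ] [SFinite ν] (a : MPAction Γ X μ) (b : MPAction Γ Y ν) :
    MPAction Γ (X × Y) (μ.prod ν) where
  act γ := Prod.map (a.act γ) (b.act γ)
  measurePreserving_act γ := (a.measurePreserving_act γ).prod (b.measurePreserving_act γ)
  act_one p := by simp [Prod.map, a.act_one, b.act_one]
  act_mul γ δ p := by simp [Prod.map, a.act_mul, b.act_mul]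

/-- Stable weak containment: `a ≺_s b` iff `a ≺ ι × b`, where `ι` is the trivial action of `Γ`
on the standard probability space `(X₀, μ₀)`. -/
def StableWeaklyContained {X₀ : Type*} [MeasurableSpace X₀] (μ₀ : Measure X₀) [SFinite μ₀]
    (a : MPAction Γ W ρ) (b : MPAction Γ Y ν) [SFinite ν] : Prop :=
  WeaklyContained a (prodAction (trivAction Γ X₀ μ₀) b)

/-- Stable weak equivalence. -/
def StableWeakEquiv {X₀ : Type*} [MeasurableSpace X₀] (μ₀ : Measure X₀) [SFinite μ₀]
    (a : MPAction Γ W ρ) [SFinite ρ] (b : MPAction Γ Y ν) [SFinite ν] : Prop :=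
  StableWeaklyContained μ₀ a b ∧ StableWeaklyContained μ₀ b a

/-- An action is ergodic if every strictly invariant measurable set is null or conull. -/
def IsErgodicAction (a : MPAction Γ X μ) : Prop :=
  ∀ A : Set X, MeasurableSet A → (∀ γ, a.act γ ⁻¹' A = A) → μ A = 0 ∨ μ Aᶜ = 0

/-- An action is (essentially) free if almost every point has trivial stabilizer. -/
def IsFreeAction (a : MPAction Γ X μ) : Prop :=
  ∀ᵐ x ∂μ, ∀ γ : Γ, γ ≠ 1 → a.act γ x ≠ x

end MPAction

section Cylinders

/-- The Cantor set. -/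
abbrev Cantor : Type := ℕ → Bool

/-- Basic clopen subsets of the Cantor set: sets determined by finitely many coordinates. -/
def cantorBasic : Set (Set Cantor) :=
  { B | ∃ (s : Finset ℕ) (σ : ℕ → Bool), B = {x : Cantor | ∀ n ∈ s, x n = σ n} }

/-- The clopen cylinder subsets of `K^Γ` of the form `π_F⁻¹(Π_{γ ∈ F} A_γ)` with `F ⊆ Γ`
finite and each `A_γ` a basic clopen subset of the Cantor set `K`. -/
def KCyl (Γ : Type*) : Set (Set (Γ → Cantor)) :=
  { C | ∃ (F : Finset Γ) (B : Γ → Set Cantor),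
      (∀ γ ∈ F, B γ ∈ cantorBasic) ∧ C = {f | ∀ γ ∈ F, f γ ∈ B γ} }

/-- The basic clopen cylinder subsets of `L^Γ` for a finite set `L`:
sets of the form `∩_{γ ∈ F} π_γ⁻¹({j_γ})`. -/
def LCyl (Γ : Type*) (L : Type*) : Set (Set (Γ → L)) :=
  { C | ∃ (F : Finset Γ) (j : Γ → L), C = {f | ∀ γ ∈ F, f γ = j γ} }

/-- `A` enumerates the collection of sets `S`. -/
def Enumerates {M : Type*} (A : ℕ → Set M) (S : Set (Set M)) : Prop :=
  (∀ i, A i ∈ S) ∧ ∀ C ∈ S, ∃ i, A i = C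

/-- The compatible metric `δ(ν,ρ) = Σ_i 2^{-(i+1)} |ν(A_i) - ρ(A_i)|` on the space of
probability measures, determined by an enumeration `A` of a generating family of sets. -/
noncomputable def deltaEnum {M : Type*} [MeasurableSpace M] (A : ℕ → Set M)
    (m m' : MeasureTheory.Measure M) : ℝ :=
  ∑' i : ℕ, (2 : ℝ) ^ (-(i : ℤ) - 1) * |(m (A i)).toReal - (m' (A i)).toReal|

/-- Convergence of a sequence of sets of measures to a set of measures in the Hausdorff
(metric) sense, with respect to a metric `δ`: for every `ε > 0`, eventually each of the two
sets is contained in the `ε`-neighbourhood of the other.  (Equivalently, the closures converge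
in the Hausdorff metric topology on the hyperspace of compact subsets.) -/
def HausTendsto {M : Type*} [MeasurableSpace M]
    (δ : MeasureTheory.Measure M → MeasureTheory.Measure M → ℝ)
    (En : ℕ → Set (MeasureTheory.Measure M)) (E : Set (MeasureTheory.Measure M)) : Prop :=
  ∀ ε : ℝ, 0 < ε → ∃ N : ℕ, ∀ n ≥ N,
    (∀ m ∈ En n, ∃ m' ∈ E, δ m m' < ε) ∧ (∀ m' ∈ E, ∃ m ∈ En n, δ m m' < ε)

variable {Γ : Type*} [Group Γ] {X : Type*} [MeasurableSpace X] {μ : MeasureTheory.Measure X}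

/-- The map `Φ^{φ,a} : X → S^Γ`, `Φ^{φ,a}(x)(γ) = φ((γ⁻¹)^a x)`, associated to an observable
`φ : X → S` and an action `a`. -/
def MPAction.phiMap (a : MPAction Γ X μ) {S : Type*} (φ : X → S) : X → (Γ → S) :=
  fun x γ => φ (a.act γ⁻¹ x)

/-- The set `E(a,S) = {(Φ^{φ,a})_* μ : φ : X → S measurable}` of shift-invariant measures
on `S^Γ` associated to the action `a`. -/
noncomputable def MPAction.ESet (a : MPAction Γ X μ) (S : Type*) [MeasurableSpace S] :
    Set (MeasureTheory.Measure (Γ → S)) :=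
  { m | ∃ φ : X → S, Measurable φ ∧ m = μ.map (a.phiMap φ) }

end Cylinders

section StmtAux

open MPAction

variable {Γ : Type*} [Group Γ] {X : Type*} [MeasurableSpace X] {μ : Measure X}

lemma act_inv_act (a : MPAction Γ X μ) (γ : Γ) (x : X) : a.act γ⁻¹ (a.act γ x) = x := by
  rw [← a.act_mul, inv_mul_cancel, a.act_one]

lemma act_act_inv (a : MPAction Γ X μ) (γ : Γ) (x : X) : a.act γ (a.act γ⁻¹ x) = x := by
  rw [← a.act_mul, mul_inv_cancel, a.act_one]

lemma act_one_image (a : MPAction Γ X μ) (s : Set X) : a.act 1 '' s = s := by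
  have : a.act 1 = id := funext a.act_one
  rw [this, Set.image_id]

lemma Cnk_subset_ball [IsProbabilityMeasure μ] (e : ℕ → Γ) (a : MPAction Γ X μ) (n k : ℕ) :
    Cnk e a n k ⊆ Metric.closedBall (0 : (Fin n × Fin k × Fin k) → ℝ) 1 := by
  apply closure_minimal _ Metric.isClosed_closedBall
  rintro v ⟨A, _, hv⟩
  rw [Metric.mem_closedBall, dist_pi_le_iff zero_le_one]
  rintro ⟨p, q, r⟩
  rw [hv p q r]
  have h1 : (μ (a.act (e ↑p) '' A q ∩ A r)).toReal ≤ 1 := by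
    have := ENNReal.toReal_mono (ENNReal.one_ne_top) (prob_le_one (μ := μ)
      (s := a.act (e ↑p) '' A q ∩ A r))
    simpa using this
  have h2 : (0:ℝ) ≤ (μ (a.act (e ↑p) '' A q ∩ A r)).toReal := ENNReal.toReal_nonneg
  simp only [Pi.zero_apply, Real.dist_eq, sub_zero]
  rw [abs_of_nonneg h2]
  exact h1

lemma Cnk_nonempty (e : ℕ → Γ) (a : MPAction Γ X μ) (n k : ℕ) (hk : 0 < k) :
    (Cnk e a n k).Nonempty := by
  set A : Fin k → Set X := fun i => if i = ⟨0, hk⟩ then Set.univ else ∅ with hA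
  have hpart : IsPartition A := by
    refine ⟨fun i => ?_, fun i j hij => ?_, ?_⟩
    · by_cases h : i = ⟨0, hk⟩ <;> simp [hA, h]
    · unfold Function.onFun
      by_cases hi : i = ⟨0, hk⟩
      · have hj : j ≠ ⟨0, hk⟩ := hi ▸ hij.symm
        simp [hA, hi, hj]
      · simp [hA, hi]
    · apply Set.eq_univ_of_forall
      intro x
      exact Set.mem_iUnion.2 ⟨⟨0, hk⟩, by simp [hA]⟩
  exact ⟨fun c => (μ (a.act (e c.1.1) '' A c.2.1 ∩ A c.2.2)).toReal,
    subset_closure ⟨A, hpart, fun p q r => rfl⟩⟩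

lemma hausdorffDist_le_two {d : Type*} [Fintype d] {s t : Set (d → ℝ)}
    (hs : s ⊆ Metric.closedBall 0 1) (ht : t ⊆ Metric.closedBall 0 1) :
    Metric.hausdorffDist s t ≤ 2 := by
  rcases s.eq_empty_or_nonempty with hse | hsne
  · rw [hse, Metric.hausdorffDist_empty']; norm_num
  rcases t.eq_empty_or_nonempty with hte | htne
  · rw [hte, Metric.hausdorffDist_empty]; norm_num
  apply Metric.hausdorffDist_le_of_mem_dist (by norm_num)
  · intro x hx
    obtain ⟨y, hy⟩ := htne
    refine ⟨y, hy, ?_⟩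
    calc dist x y ≤ dist x 0 + dist 0 y := dist_triangle _ _ _
      _ ≤ 1 + 1 := add_le_add (hs hx) (by rw [dist_comm]; exact ht hy)
      _ = 2 := by norm_num
  · intro y hy
    obtain ⟨x, hx⟩ := hsne
    refine ⟨x, hx, ?_⟩
    calc dist y x ≤ dist y 0 + dist 0 x := dist_triangle _ _ _
      _ ≤ 1 + 1 := add_le_add (ht hy) (by rw [dist_comm]; exact hs hx)
      _ = 2 := by norm_num

lemma term_le_dWE [IsProbabilityMeasure μ] (e : ℕ → Γ) (a b : MPAction Γ X μ) (n k : ℕ) :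
    (2:ℝ) ^ (-(n:ℤ) - (k:ℤ)) * Metric.hausdorffDist (Cnk e a n k) (Cnk e b n k)
      ≤ dWE e a b := by
  have hterm_nonneg : ∀ nk : ℕ × ℕ, 0 ≤ (2:ℝ) ^ (-(nk.1:ℤ) - (nk.2:ℤ)) *
      Metric.hausdorffDist (Cnk e a nk.1 nk.2) (Cnk e b nk.1 nk.2) :=
    fun nk => mul_nonneg (by positivity) Metric.hausdorffDist_nonneg
  have hpow : ∀ nk : ℕ × ℕ, (2:ℝ) ^ (-(nk.1:ℤ) - (nk.2:ℤ))
      = (1/2:ℝ) ^ nk.1 * (1/2:ℝ) ^ nk.2 := by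
    intro nk
    rw [zpow_sub₀ (two_ne_zero), zpow_neg, zpow_natCast, zpow_natCast, one_div,
      inv_pow, inv_pow, div_eq_mul_inv]
  have hsumg : Summable (fun nk : ℕ × ℕ => (1/2:ℝ) ^ nk.1 * ((2:ℝ) * (1/2:ℝ) ^ nk.2)) := by
    exact Summable.mul_of_nonneg (f := fun m : ℕ => (1/2:ℝ) ^ m)
      (g := fun m : ℕ => (2:ℝ) * (1/2:ℝ) ^ m)
      (summable_geometric_of_lt_one (by norm_num) (by norm_num))
      ((summable_geometric_of_lt_one (by norm_num) (by norm_num)).mul_left 2)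
      (fun i => by positivity) (fun i => by positivity)
  have hsum : Summable (fun nk : ℕ × ℕ => (2:ℝ) ^ (-(nk.1:ℤ) - (nk.2:ℤ)) *
      Metric.hausdorffDist (Cnk e a nk.1 nk.2) (Cnk e b nk.1 nk.2)) := by
    apply Summable.of_nonneg_of_le hterm_nonneg _ hsumg
    intro nk
    have hd2 : Metric.hausdorffDist (Cnk e a nk.1 nk.2) (Cnk e b nk.1 nk.2) ≤ 2 :=
      hausdorffDist_le_two (Cnk_subset_ball e a nk.1 nk.2) (Cnk_subset_ball e b nk.1 nk.2)
    calc (2:ℝ) ^ (-(nk.1:ℤ) - (nk.2:ℤ)) *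
        Metric.hausdorffDist (Cnk e a nk.1 nk.2) (Cnk e b nk.1 nk.2)
        ≤ (2:ℝ) ^ (-(nk.1:ℤ) - (nk.2:ℤ)) * 2 := by
          apply mul_le_mul_of_nonneg_left hd2 (by positivity)
      _ = (1/2:ℝ) ^ nk.1 * ((2:ℝ) * (1/2:ℝ) ^ nk.2) := by rw [hpow]; ring
  exact Summable.le_tsum hsum (n, k) (fun j _ => hterm_nonneg j)

lemma LCyl_measurableSet {k : ℕ} {C : Set (Γ → Fin k)} (h : C ∈ LCyl Γ (Fin k)) :
    MeasurableSet C := by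
  obtain ⟨F, j, rfl⟩ := h
  have : {f : Γ → Fin k | ∀ γ ∈ F, f γ = j γ}
      = ⋂ γ ∈ F, (fun f : Γ → Fin k => f γ) ⁻¹' {j γ} := by
    ext f; simp
  rw [this]
  exact MeasurableSet.biInter F.countable_toSet
    (fun γ _ => (measurable_pi_apply γ) (measurableSet_singleton _))

lemma measurable_phiMap (a : MPAction Γ X μ) {L : Type*} [MeasurableSpace L] {φ : X → L}
    (hφ : Measurable φ) : Measurable (a.phiMap φ) :=
  measurable_pi_lambda _ fun γ => hφ.comp (a.measurePreserving_act γ⁻¹).measurable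

end StmtAux

open MPAction in
set_option maxHeartbeats 1000000 in
/-- Let `L` be a finite set of size `k` (modelled as `Fin k`).  For every
finite family `(A_p)_{p ≤ q}` of basic clopen cylinder subsets of `L^Γ` and every `ε > 0`
there is `δ > 0` such that whenever `a, b` are measure-preserving actions of `Γ` on `(X,μ)`
with `d(a,b) < δ`, for every measurable `φ : X → L` there is a measurable `ψ : X → L` with
`|(Φ_L^{φ,a})_*μ(A_p) − (Φ_L^{ψ,b})_*μ(A_p)| < ε` for all `p ≤ q`. -/
theorem cylinder_measure_perturbation
    (Γ : Type) [Group Γ] [Countable Γ]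
    (X : Type) [MeasurableSpace X] [StandardBorelSpace X]
    (μ : Measure X) [IsProbabilityMeasure μ] [NullSingletonClass μ]
    (e : ℕ → Γ) (he : Function.Surjective e)
    (k : ℕ) (q : ℕ) (A : Fin q → Set (Γ → Fin k))
    (hA : ∀ p, A p ∈ LCyl Γ (Fin k))
    (ε : ℝ) (hε : 0 < ε) :
    ∃ δ : ℝ, 0 < δ ∧ ∀ a b : MPAction Γ X μ, MPAction.dWE e a b < δ →
      ∀ φ : X → Fin k, Measurable φ →
        ∃ ψ : X → Fin k, Measurable ψ ∧ ∀ p : Fin q,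
          |((μ.map (a.phiMap φ)) (A p)).toReal - ((μ.map (b.phiMap ψ)) (A p)).toReal| < ε := by
  classical
  rcases Nat.eq_zero_or_pos k with hk0 | hk
  · subst hk0
    refine ⟨1, one_pos, fun a b _ φ hφ => ?_⟩
    have hX : Nonempty X := by
      by_contra h
      rw [not_nonempty_iff] at h
      have h1 : μ Set.univ = 1 := measure_univ
      rw [Set.univ_eq_empty_iff.2 h, measure_empty] at h1
      exact one_ne_zero h1.symm
    exact (φ hX.some).elim0
  -- cylinder data
  choose Fp jp hAp using hA
  set F : Finset Γ := insert 1 (Finset.univ.biUnion Fp) with hF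
  have h1F : (1:Γ) ∈ F := Finset.mem_insert_self _ _
  have hFpF : ∀ p, ∀ γ ∈ Fp p, γ ∈ F := fun p γ h =>
    Finset.mem_insert_of_mem (Finset.mem_biUnion.2 ⟨p, Finset.mem_univ _, h⟩)
  haveI : Nonempty (Fin k) := ⟨⟨0, hk⟩⟩
  obtain ⟨K, hK, ⟨E⟩⟩ : ∃ K : ℕ, 0 < K ∧ Nonempty (Fin K ≃ ({γ // γ ∈ F} → Fin k)) :=
    ⟨Fintype.card _, Fintype.card_pos, ⟨(Fintype.equivFin _).symm⟩⟩
  set γ₁ : {γ // γ ∈ F} := ⟨1, h1F⟩ with hγ₁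
  -- enumeration indices
  set g : Γ → ℕ := fun γ => (he γ).choose with hg
  have heg : ∀ γ, e (g γ) = γ := fun γ => (he γ).choose_spec
  set n : ℕ := F.sup g + 1 with hn
  have hgn : ∀ γ ∈ F, g γ < n := fun γ h => Nat.lt_succ_of_le (Finset.le_sup h)
  -- error budget
  obtain ⟨cT, hcT⟩ : ∃ c : ℕ, Fintype.card ({γ // γ ∈ F} × Fin K × Fin K) = c :=
    ⟨_, rfl⟩
  set η : ℝ := ε / (2 * K + 2 * cT + 1) with hηdef
  have hη : 0 < η := div_pos hε (by positivity)
  refine ⟨(2:ℝ) ^ (-(n:ℤ) - (K:ℤ)) * η, mul_pos (zpow_pos two_pos _) hη, ?_⟩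
  intro a b hab φ hφ
  -- Hausdorff distance bound at (n, K)
  have hdH : Metric.hausdorffDist (Cnk e a n K) (Cnk e b n K) < η := by
    have h1 := term_le_dWE e a b n K
    have h2 := lt_of_le_of_lt h1 hab
    exact lt_of_mul_lt_mul_left h2 (by positivity)
  -- the partition associated to φ and a
  set wB : X → ({γ // γ ∈ F} → Fin k) := fun x γ => φ (a.act (γ:Γ)⁻¹ x) with hwB
  set B : Fin K → Set X := fun i => {x | wB x = E i} with hB
  have hBmeas : ∀ i, MeasurableSet (B i) := by
    intro i
    have : B i = ⋂ γ : {γ // γ ∈ F}, (fun x => φ (a.act (γ:Γ)⁻¹ x)) ⁻¹' {E i γ} := by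
      ext x
      simp only [hB, Set.mem_setOf_eq, Set.mem_iInter, Set.mem_preimage,
        Set.mem_singleton_iff, funext_iff]
      exact Iff.rfl
    rw [this]
    exact MeasurableSet.iInter fun γ =>
      (hφ.comp (a.measurePreserving_act _).measurable) (measurableSet_singleton _)
  have hBdisj : Pairwise (Function.onFun Disjoint B) := by
    intro i j hij
    rw [Function.onFun, Set.disjoint_left]
    intro x hxi hxj
    exact hij (E.injective ((hxi.symm.trans hxj : E i = E j)))
  have hBpart : IsPartition B := by
    refine ⟨hBmeas, hBdisj, Set.eq_univ_of_forall fun x => Set.mem_iUnion.2 ⟨E.symm (wB x), ?_⟩⟩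
    show wB x = E (E.symm (wB x))
    rw [E.apply_symm_apply]
  have hva : (fun c : Fin n × Fin K × Fin K =>
      (μ (a.act (e c.1.1) '' B c.2.1 ∩ B c.2.2)).toReal) ∈ Cnk e a n K :=
    subset_closure ⟨B, hBpart, fun p qq r => rfl⟩
  set va : (Fin n × Fin K × Fin K) → ℝ := fun c =>
    (μ (a.act (e c.1.1) '' B c.2.1 ∩ B c.2.2)).toReal with hvadef
  have hedist : EMetric.hausdorffEdist (Cnk e a n K) (Cnk e b n K) ≠ ⊤ :=
    Metric.hausdorffEdist_ne_top_of_nonempty_of_bounded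
      (Cnk_nonempty e a n K hK) (Cnk_nonempty e b n K hK)
      (Metric.isBounded_closedBall.subset (Cnk_subset_ball e a n K))
      (Metric.isBounded_closedBall.subset (Cnk_subset_ball e b n K))
  obtain ⟨vb, hvb, hd1⟩ := Metric.exists_dist_lt_of_hausdorffDist_lt hva hdH hedist
  obtain ⟨vb', hvb', hd2⟩ := Metric.mem_closure_iff.1 hvb η hη
  obtain ⟨C, hCpart, hvC⟩ := hvb'
  have hdist : ∀ (p : Fin n) (qq r : Fin K),
      |va (p, qq, r) - vb' (p, qq, r)| < 2 * η := by
    intro p qq r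
    have h1 : dist va vb' < 2 * η :=
      lt_of_le_of_lt (dist_triangle va vb vb') (by linarith)
    have h2 := dist_le_pi_dist va vb' (p, qq, r)
    rw [Real.dist_eq] at h2
    linarith
  have key : ∀ γ ∈ F, ∀ qq r : Fin K,
      |(μ (a.act γ '' B qq ∩ B r)).toReal - (μ (b.act γ '' C qq ∩ C r)).toReal| < 2 * η := by
    intro γ hγ qq r
    have h := hdist ⟨g γ, hgn γ hγ⟩ qq r
    rw [hvC ⟨g γ, hgn γ hγ⟩ qq r] at h
    simp only [hvadef] at h
    rw [heg γ] at h
    exact h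
  obtain ⟨hCmeas, hCdisj, hCcover⟩ := hCpart
  -- per-cell measure comparison
  have hBC : ∀ i : Fin K, |(μ (B i)).toReal - (μ (C i)).toReal| < 2 * η := by
    intro i
    have h := key 1 h1F i i
    rw [act_one_image a, act_one_image b, Set.inter_self, Set.inter_self] at h
    exact h
  -- incompatibility
  have hBincomp : ∀ (γ : {γ // γ ∈ F}) (i i' : Fin K), E i γ ≠ E i' γ₁ →
      a.act (γ:Γ) '' B i' ∩ B i = ∅ := by
    intro γ i i' hne'
    ext x
    simp only [Set.mem_inter_iff, Set.mem_image, Set.mem_empty_iff_false, iff_false, not_and]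
    rintro ⟨y, hy, rfl⟩ hx
    apply hne'
    have h1 : wB (a.act (γ:Γ) y) = E i := hx
    have h2 : wB y = E i' := hy
    have h3 : φ (a.act (γ:Γ)⁻¹ (a.act (γ:Γ) y)) = E i γ := by
      rw [← h1]
    have h4 : φ (a.act ((1:Γ))⁻¹ y) = E i' γ₁ := by
      rw [← h2]
    rw [act_inv_act a] at h3
    rw [inv_one, a.act_one] at h4
    rw [← h3, ← h4]
  have hCsmall : ∀ (γ : {γ // γ ∈ F}) (i i' : Fin K), E i γ ≠ E i' γ₁ →
      (μ (b.act (γ:Γ) '' C i' ∩ C i)).toReal < 2 * η := by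
    intro γ i i' hne'
    have h := key (γ:Γ) γ.2 i' i
    rw [hBincomp γ i i' hne', measure_empty] at h
    simp only [ENNReal.toReal_zero, zero_sub, abs_neg, abs_of_nonneg ENNReal.toReal_nonneg] at h
    exact h
  -- index function of the partition C
  have hCex : ∀ x, ∃ i, x ∈ C i := fun x =>
    Set.mem_iUnion.1 (hCcover ▸ Set.mem_univ x)
  set idx : X → Fin K := fun x => (hCex x).choose with hidxdef
  have hidx : ∀ x, x ∈ C (idx x) := fun x => (hCex x).choose_spec
  have hidx_eq : ∀ x i, x ∈ C i → idx x = i := by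
    intro x i hx
    by_contra hne'
    exact Set.disjoint_left.1 (hCdisj hne') (hidx x) hx
  have hidx_pre : ∀ i, idx ⁻¹' {i} = C i := by
    intro i
    ext x
    simp only [Set.mem_preimage, Set.mem_singleton_iff]
    exact ⟨fun h => h ▸ hidx x, fun h => hidx_eq x i h⟩
  have hidx_meas : Measurable idx :=
    measurable_to_countable' fun i => (hidx_pre i) ▸ hCmeas i
  -- the new observable ψ
  set ψ : X → Fin k := fun x => E (idx x) γ₁ with hψdef
  have hψ : Measurable ψ := by
    apply measurable_to_countable'
    intro c
    have : ψ ⁻¹' {c} = idx ⁻¹' ((fun i => E i γ₁) ⁻¹' {c}) := rfl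
    rw [this]
    exact hidx_meas ((Set.toFinite _).measurableSet)
  -- the bad set N
  set Bad : {γ // γ ∈ F} × Fin K × Fin K → Prop :=
    fun t => E t.2.2 t.1 ≠ E t.2.1 γ₁ with hBad
  set N : Set X := ⋃ t : {γ // γ ∈ F} × Fin K × Fin K,
    if Bad t then b.act (t.1:Γ) '' C t.2.1 ∩ C t.2.2 else ∅ with hNdef
  have hμN : (μ N).toReal ≤ (cT:ℝ) * (2 * η) := by
    have h1 : μ N ≤ ∑ t : {γ // γ ∈ F} × Fin K × Fin K,
        μ (if Bad t then b.act (t.1:Γ) '' C t.2.1 ∩ C t.2.2 else ∅) :=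
      measure_iUnion_fintype_le μ _
    have hfin : (∑ t : {γ // γ ∈ F} × Fin K × Fin K,
        μ (if Bad t then b.act (t.1:Γ) '' C t.2.1 ∩ C t.2.2 else ∅)) ≠ ⊤ := by
      refine (ENNReal.sum_lt_top.2 fun t _ => ?_).ne
      exact (measure_ne_top μ _).lt_top
    calc (μ N).toReal ≤ (∑ t : {γ // γ ∈ F} × Fin K × Fin K,
          μ (if Bad t then b.act (t.1:Γ) '' C t.2.1 ∩ C t.2.2 else ∅)).toReal :=
        ENNReal.toReal_mono hfin h1
      _ = ∑ t : {γ // γ ∈ F} × Fin K × Fin K,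
          (μ (if Bad t then b.act (t.1:Γ) '' C t.2.1 ∩ C t.2.2 else ∅)).toReal :=
        ENNReal.toReal_sum (fun t _ => measure_ne_top μ _)
      _ ≤ ∑ _t : {γ // γ ∈ F} × Fin K × Fin K, 2 * η := by
        refine Finset.sum_le_sum fun t _ => ?_
        by_cases hbad : Bad t
        · rw [if_pos hbad]
          exact (hCsmall t.1 t.2.2 t.2.1 hbad).le
        · rw [if_neg hbad, measure_empty]
          simp only [ENNReal.toReal_zero]
          positivity
      _ = (cT:ℝ) * (2 * η) := by
        rw [Finset.sum_const, nsmul_eq_mul, Finset.card_univ, hcT]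
  -- outside N, membership in ψ-cylinders is determined by idx
  have hψact : ∀ x, x ∉ N → ∀ γ : {γ // γ ∈ F}, ψ (b.act (γ:Γ)⁻¹ x) = E (idx x) γ := by
    intro x hxN γ
    by_contra hcon
    apply hxN
    refine Set.mem_iUnion.2 ⟨(γ, idx (b.act (γ:Γ)⁻¹ x), idx x), ?_⟩
    have hbad : Bad (γ, idx (b.act (γ:Γ)⁻¹ x), idx x) := by
      intro hEq
      exact hcon hEq.symm
    rw [if_pos hbad]
    exact ⟨⟨b.act (γ:Γ)⁻¹ x, hidx _, act_act_inv b (γ:Γ) x⟩, hidx x⟩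
  refine ⟨ψ, hψ, ?_⟩
  intro pp
  -- the index sets
  set G : Finset (Fin K) := Finset.univ.filter
    (fun i => ∀ γ (h : γ ∈ Fp pp), E i ⟨γ, hFpF pp γ h⟩ = jp pp γ) with hGdef
  have hApm : MeasurableSet (A pp) := LCyl_measurableSet ⟨Fp pp, jp pp, hAp pp⟩
  have hmapa : (μ.map (a.phiMap φ)) (A pp) = μ (a.phiMap φ ⁻¹' A pp) :=
    Measure.map_apply (measurable_phiMap a hφ) hApm
  have hmapb : (μ.map (b.phiMap ψ)) (A pp) = μ (b.phiMap ψ ⁻¹' A pp) :=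
    Measure.map_apply (measurable_phiMap b hψ) hApm
  -- the a-side preimage is exactly a union of B-cells
  have hSa : a.phiMap φ ⁻¹' A pp = ⋃ i ∈ G, B i := by
    ext x
    constructor
    · intro hx
      have hx' : ∀ γ ∈ Fp pp, φ (a.act γ⁻¹ x) = jp pp γ := by
        rw [Set.mem_preimage, hAp pp] at hx
        exact hx
      refine Set.mem_iUnion₂.2 ⟨E.symm (wB x), ?_, ?_⟩
      · rw [hGdef, Finset.mem_filter]
        refine ⟨Finset.mem_univ _, fun γ h => ?_⟩
        rw [E.apply_symm_apply]
        exact hx' γ h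
      · show wB x = E (E.symm (wB x))
        rw [E.apply_symm_apply]
    · intro hx
      obtain ⟨i, hiG, hiB⟩ := Set.mem_iUnion₂.1 hx
      rw [Set.mem_preimage, hAp pp]
      intro γ hγ
      have h1 : wB x = E i := hiB
      have h2 : φ (a.act γ⁻¹ x) = E i ⟨γ, hFpF pp γ hγ⟩ := by rw [← h1]
      show φ (a.act γ⁻¹ x) = jp pp γ
      rw [h2]
      exact (Finset.mem_filter.1 hiG).2 γ hγ
  set U : Set X := ⋃ i ∈ G, C i with hUdef
  have hUiff : ∀ x, x ∈ U ↔ idx x ∈ G := by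
    intro x
    constructor
    · intro h
      obtain ⟨i, hi, hx⟩ := Set.mem_iUnion₂.1 h
      rw [hidx_eq x i hx]
      exact hi
    · intro h
      exact Set.mem_iUnion₂.2 ⟨idx x, h, hidx x⟩
  have hSbiff : ∀ x, x ∉ N → (x ∈ b.phiMap ψ ⁻¹' A pp ↔ idx x ∈ G) := by
    intro x hxN
    rw [Set.mem_preimage, hAp pp]
    constructor
    · intro hx
      rw [hGdef, Finset.mem_filter]
      refine ⟨Finset.mem_univ _, fun γ h => ?_⟩
      rw [← hψact x hxN ⟨γ, hFpF pp γ h⟩]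
      exact hx γ h
    · intro h γ hγ
      show ψ (b.act γ⁻¹ x) = jp pp γ
      rw [hψact x hxN ⟨γ, hFpF pp γ hγ⟩]
      exact (Finset.mem_filter.1 h).2 γ hγ
  have hsub1 : b.phiMap ψ ⁻¹' A pp ⊆ U ∪ N := by
    intro x hx
    by_cases hxN : x ∈ N
    · exact Or.inr hxN
    · exact Or.inl ((hUiff x).2 ((hSbiff x hxN).1 hx))
  have hsub2 : U ⊆ (b.phiMap ψ ⁻¹' A pp) ∪ N := by
    intro x hx
    by_cases hxN : x ∈ N
    · exact Or.inr hxN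
    · exact Or.inl ((hSbiff x hxN).2 ((hUiff x).1 hx))
  -- measure computations
  have hSaeval : (μ (a.phiMap φ ⁻¹' A pp)).toReal = ∑ i ∈ G, (μ (B i)).toReal := by
    rw [hSa, measure_biUnion_finset (fun i _ j _ hij => hBdisj hij) (fun i _ => hBmeas i),
      ENNReal.toReal_sum (fun i _ => measure_ne_top μ _)]
  have hUeval : (μ U).toReal = ∑ i ∈ G, (μ (C i)).toReal := by
    rw [hUdef, measure_biUnion_finset (fun i _ j _ hij => hCdisj hij) (fun i _ => hCmeas i),
      ENNReal.toReal_sum (fun i _ => measure_ne_top μ _)]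
  have habs1 : |∑ i ∈ G, (μ (B i)).toReal - ∑ i ∈ G, (μ (C i)).toReal| ≤ (K:ℝ) * (2 * η) := by
    rw [← Finset.sum_sub_distrib]
    calc |∑ i ∈ G, ((μ (B i)).toReal - (μ (C i)).toReal)|
        ≤ ∑ i ∈ G, |(μ (B i)).toReal - (μ (C i)).toReal| := Finset.abs_sum_le_sum_abs _ _
      _ ≤ ∑ _i ∈ G, 2 * η := Finset.sum_le_sum fun i _ => (hBC i).le
      _ = (G.card : ℝ) * (2 * η) := by rw [Finset.sum_const, nsmul_eq_mul]
      _ ≤ (K:ℝ) * (2 * η) := by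
        have hcard : G.card ≤ K := by
          calc G.card ≤ Finset.univ.card := Finset.card_le_univ _
            _ = K := by rw [Finset.card_univ, Fintype.card_fin]
        exact mul_le_mul_of_nonneg_right (Nat.cast_le.2 hcard) (by positivity)
  have habs2 : |(μ U).toReal - (μ (b.phiMap ψ ⁻¹' A pp)).toReal| ≤ (μ N).toReal := by
    have e1 : μ U ≤ μ (b.phiMap ψ ⁻¹' A pp) + μ N :=
      (measure_mono hsub2).trans (measure_union_le _ _)
    have e2 : μ (b.phiMap ψ ⁻¹' A pp) ≤ μ U + μ N :=
      (measure_mono hsub1).trans (measure_union_le _ _)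
    have f1 : (μ U).toReal ≤ (μ (b.phiMap ψ ⁻¹' A pp)).toReal + (μ N).toReal := by
      have := ENNReal.toReal_mono
        (ENNReal.add_ne_top.2 ⟨measure_ne_top μ _, measure_ne_top μ _⟩) e1
      rwa [ENNReal.toReal_add (measure_ne_top μ _) (measure_ne_top μ _)] at this
    have f2 : (μ (b.phiMap ψ ⁻¹' A pp)).toReal ≤ (μ U).toReal + (μ N).toReal := by
      have := ENNReal.toReal_mono
        (ENNReal.add_ne_top.2 ⟨measure_ne_top μ _, measure_ne_top μ _⟩) e2
      rwa [ENNReal.toReal_add (measure_ne_top μ _) (measure_ne_top μ _)] at this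
    rw [abs_sub_le_iff]
    constructor <;> linarith
  -- final arithmetic
  have hfinal : (K:ℝ) * (2 * η) + (cT:ℝ) * (2 * η) < ε := by
    have hc : (0:ℝ) ≤ 2 * (K:ℝ) + 2 * (cT:ℝ) := by positivity
    have h0 : (0:ℝ) < 2 * (K:ℝ) + 2 * (cT:ℝ) + 1 := by linarith
    have hd : (2 * (K:ℝ) + 2 * (cT:ℝ)) * η < ε := by
      rw [hηdef, ← mul_div_assoc, div_lt_iff₀ h0]
      nlinarith
    nlinarith
  rw [hmapa, hmapb, hSaeval]
  calc |∑ i ∈ G, (μ (B i)).toReal - (μ (b.phiMap ψ ⁻¹' A pp)).toReal|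
      ≤ |∑ i ∈ G, (μ (B i)).toReal - (μ U).toReal|
        + |(μ U).toReal - (μ (b.phiMap ψ ⁻¹' A pp)).toReal| := abs_sub_le _ _ _
    _ ≤ (K:ℝ) * (2 * η) + (cT:ℝ) * (2 * η) := by
        have habs1' : |∑ i ∈ G, (μ (B i)).toReal - (μ U).toReal| ≤ (K:ℝ) * (2 * η) := by
          rw [hUeval]; exact habs1
        exact add_le_add habs1' (habs2.trans hμN)
    _ < ε := hfinal
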